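/- In B_{m,n}(q,t), for every k with 1 ≤ k ≤ min{m,n} − 1, one has e_{k+1} = ((q − q⁻¹)/(t − t⁻¹))^{k−1} · e_k H_{-k}⁻¹ H_k e_k. -/

import Mathlib

open scoped Classical

noncomputable section

/-- The field `ℚ(q,t)` of rational functions in two indeterminates over `ℚ`. -/
abbrev KK : Type := FractionRing (MvPolynomial (Fin 2) ℚ)

/-- The indeterminate `q` viewed inside `ℚ(q,t)`. -/
def qv : KK := algebraMap (MvPolynomial (Fin 2) ℚ) KK (MvPolynomial.X 0)

/-- The indeterminate `t` viewed inside `ℚ(q,t)`. -/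
def tv : KK := algebraMap (MvPolynomial (Fin 2) ℚ) KK (MvPolynomial.X 1)

/-- The valid indices `i` for the generators `H i` of `B_{m,n}(q,t)`:
`1 ≤ i ≤ n - 1` or `1 ≤ -i ≤ m - 1`. -/
def validIdx (m n : ℕ) (i : ℤ) : Prop :=
  (1 ≤ i ∧ i ≤ (n : ℤ) - 1) ∨ (1 ≤ -i ∧ -i ≤ (m : ℤ) - 1)

/-- Generators of the quantized walled Brauer algebra `B_{m,n}(q,t)`. -/
inductive WBgen (m n : ℕ) : Type
  | H (i : ℤ) (h : validIdx m n i) : WBgen m n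
  | E : WBgen m n

/-- The generator `H i` in the free algebra. -/
def fH (m n : ℕ) (i : ℤ) (h : validIdx m n i) : FreeAlgebra KK (WBgen m n) :=
  FreeAlgebra.ι KK (WBgen.H i h)

/-- The generator `e` in the free algebra. -/
def fE (m n : ℕ) : FreeAlgebra KK (WBgen m n) := FreeAlgebra.ι KK WBgen.E

/-- The element `H i - (q - q⁻¹)`, which becomes the inverse of `H i` in the quotient. -/
def fHinv (m n : ℕ) (i : ℤ) (h : validIdx m n i) : FreeAlgebra KK (WBgen m n) :=
  fH m n i h - algebraMap KK _ (qv - qv⁻¹)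

/-- The defining relations of the quantized walled Brauer algebra `B_{m,n}(q,t)`. -/
inductive WBrel (m n : ℕ) :
    FreeAlgebra KK (WBgen m n) → FreeAlgebra KK (WBgen m n) → Prop
  | quad (i : ℤ) (h : validIdx m n i) :
      WBrel m n ((fH m n i h - algebraMap KK _ qv) * (fH m n i h + algebraMap KK _ qv⁻¹)) 0
  | comm (i : ℤ) (hi : validIdx m n i) (j : ℤ) (hj : validIdx m n j) (hij : 1 < |i - j|) :
      WBrel m n (fH m n i hi * fH m n j hj) (fH m n j hj * fH m n i hi)
  | braid (i : ℤ) (hi : validIdx m n i) (hi1 : validIdx m n (i + 1)) :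
      WBrel m n (fH m n i hi * fH m n (i + 1) hi1 * fH m n i hi)
        (fH m n (i + 1) hi1 * fH m n i hi * fH m n (i + 1) hi1)
  | commE (i : ℤ) (hi : validIdx m n i) (h2 : 2 ≤ |i|) :
      WBrel m n (fH m n i hi * fE m n) (fE m n * fH m n i hi)
  | eHe (i : ℤ) (hi : validIdx m n i) (h : i = 1 ∨ i = -1) :
      WBrel m n (fE m n * fH m n i hi * fE m n) (algebraMap KK _ tv * fE m n)
  | esq : WBrel m n (fE m n * fE m n)
      (algebraMap KK _ ((tv - tv⁻¹) / (qv - qv⁻¹)) * fE m n)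
  | rel7 (h1 : validIdx m n 1) (hm : validIdx m n (-1)) :
      WBrel m n (fE m n * fHinv m n (-1) hm * fH m n 1 h1 * fE m n * fH m n (-1) hm)
        (fE m n * fHinv m n (-1) hm * fH m n 1 h1 * fE m n * fH m n 1 h1)
  | rel8 (h1 : validIdx m n 1) (hm : validIdx m n (-1)) :
      WBrel m n (fH m n (-1) hm * fE m n * fHinv m n (-1) hm * fH m n 1 h1 * fE m n)
        (fH m n 1 h1 * fE m n * fHinv m n (-1) hm * fH m n 1 h1 * fE m n)

/-- The quantized walled Brauer algebra `B_{m,n}(q,t)`. -/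
abbrev WB (m n : ℕ) : Type := RingQuot (WBrel m n)

/-- The generator `H i` of `B_{m,n}(q,t)`. -/
def HB (m n : ℕ) (i : ℤ) (h : validIdx m n i) : WB m n :=
  RingQuot.mkAlgHom KK (WBrel m n) (fH m n i h)

/-- The generator `e` of `B_{m,n}(q,t)`. -/
def EB (m n : ℕ) : WB m n := RingQuot.mkAlgHom KK (WBrel m n) (fE m n)

/-- The inverse `H i⁻¹ = H i - (q - q⁻¹)` of the generator `H i`. -/
def HBinv (m n : ℕ) (i : ℤ) (h : validIdx m n i) : WB m n :=
  HB m n i h - algebraMap KK _ (qv - qv⁻¹)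

/-- Total version of `H i` (equal to `H i` for valid `i`, junk value `1` otherwise). -/
def Htil (m n : ℕ) (i : ℤ) : WB m n :=
  if h : validIdx m n i then HB m n i h else 1

/-- Total version of `H i⁻¹` (equal to `H i⁻¹` for valid `i`, junk value `1` otherwise). -/
def Htilinv (m n : ℕ) (i : ℤ) : WB m n :=
  if h : validIdx m n i then HBinv m n i h else 1

/-- The elements `e_k`:  `e_0 = 1`, `e_1 = e`, and
`e_{k+1} = e ⬝ H_{-1}⁻¹ H_{-2}⁻¹ ⋯ H_{-k}⁻¹ ⬝ H_1 H_2 ⋯ H_k ⬝ e_k`. -/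
def ek (m n : ℕ) : ℕ → WB m n
  | 0 => 1
  | k + 1 =>
      EB m n *
        (((List.range k).map (fun j => Htilinv m n (-((j + 1 : ℕ) : ℤ)))).prod) *
        (((List.range k).map (fun j => Htil m n ((j + 1 : ℕ) : ℤ))).prod) *
        ek m n k
section Aux

lemma kk_inj : Function.Injective (algebraMap (MvPolynomial (Fin 2) ℚ) KK) :=
  IsFractionRing.injective _ _

lemma qv_ne_zero : qv ≠ 0 := by
  intro h
  exact MvPolynomial.X_ne_zero 0 (kk_inj (by simpa [qv] using h))

lemma tv_ne_zero : tv ≠ 0 := by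
  intro h
  exact MvPolynomial.X_ne_zero 1 (kk_inj (by simpa [tv] using h))

lemma qsub_ne : qv - qv⁻¹ ≠ 0 := by
  intro h
  have h1 : qv = qv⁻¹ := sub_eq_zero.mp h
  have h2 : qv * qv = 1 := by
    nth_rewrite 2 [h1]; exact mul_inv_cancel₀ qv_ne_zero
  have h3 : (MvPolynomial.X 0 * MvPolynomial.X 0 : MvPolynomial (Fin 2) ℚ) = 1 := by
    apply kk_inj; rw [map_mul, map_one]; exact h2
  have := congrArg (MvPolynomial.eval (fun _ => (2:ℚ))) h3
  simp at this
  norm_num at this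

lemma tsub_ne : tv - tv⁻¹ ≠ 0 := by
  intro h
  have h1 : tv = tv⁻¹ := sub_eq_zero.mp h
  have h2 : tv * tv = 1 := by
    nth_rewrite 2 [h1]; exact mul_inv_cancel₀ tv_ne_zero
  have h3 : (MvPolynomial.X 1 * MvPolynomial.X 1 : MvPolynomial (Fin 2) ℚ) = 1 := by
    apply kk_inj; rw [map_mul, map_one]; exact h2
  have := congrArg (MvPolynomial.eval (fun _ => (2:ℚ))) h3
  simp at this
  norm_num at this

/-- The parameter `δ = (t - t⁻¹)/(q - q⁻¹)`. -/
def δv : KK := (tv - tv⁻¹) / (qv - qv⁻¹)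

lemma δv_ne : δv ≠ 0 := div_ne_zero tsub_ne qsub_ne

end Aux
section Aux2

variable {m n : ℕ}

local notation "cc" => algebraMap KK (WB m n)

lemma central (s : KK) (u : WB m n) : u * algebraMap KK (WB m n) s = algebraMap KK (WB m n) s * u :=
  (Algebra.commutes s u).symm

lemma mul_scalar_left (s : KK) (u v : WB m n) :
    u * (algebraMap KK (WB m n) s * v) = algebraMap KK (WB m n) s * (u * v) := by
  rw [← mul_assoc, ← Algebra.commutes s u, mul_assoc]

lemma scalar_scalar (s r : KK) (v : WB m n) :
    algebraMap KK (WB m n) s * (algebraMap KK (WB m n) r * v)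
      = algebraMap KK (WB m n) (s * r) * v := by
  rw [← mul_assoc, ← map_mul]

lemma scalar_cancel (s : KK) (hs : s ≠ 0) {u v : WB m n}
    (h : algebraMap KK (WB m n) s * u = algebraMap KK (WB m n) s * v) : u = v := by
  have h2 := congrArg (fun w => algebraMap KK (WB m n) s⁻¹ * w) h
  simpa [scalar_scalar, inv_mul_cancel₀ hs] using h2

lemma lcomm {R : Type*} [Semigroup R] {a b : R} (h : Commute a b) (c : R) :
    a * (b * c) = b * (a * c) := by
  rw [← mul_assoc, h.eq, mul_assoc]

lemma comm_sub_helper {A : Type*} [Ring A] (x y c : A) (hxy : x*y = y*x) (hxc : x*c = c*x) :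
    x*(y - c) = (y - c)*x := by rw [mul_sub, sub_mul, hxy, hxc]

lemma quad_helper1 {A : Type*} [Ring A] (H a b : A) (hab : a * b = 1)
    (ha : a * H = H * a) (h0 : (H - a) * (H + b) = 0) : H * (H - (a - b)) = 1 := by
  calc H * (H - (a - b)) = (H - a) * (H + b) + (a * H - H * a) + a * b := by noncomm_ring
    _ = 0 + (H * a - H * a) + 1 := by rw [h0, ha, hab]
    _ = 1 := by noncomm_ring

lemma quad_helper2 {A : Type*} [Ring A] (H a b : A) (hab : a * b = 1)
    (hb : b * H = H * b) (h0 : (H - a) * (H + b) = 0) : (H - (a - b)) * H = 1 := by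
  calc (H - (a - b)) * H = (H - a) * (H + b) + a * b + (b * H - H * b) := by noncomm_ring
    _ = 0 + 1 + (H * b - H * b) := by rw [h0, hb, hab]
    _ = 1 := by noncomm_ring

-- quadratic relation
lemma quad_rel (i : ℤ) (h : validIdx m n i) :
    (HB m n i h - cc qv) * (HB m n i h + cc qv⁻¹) = 0 := by
  have h0 : RingQuot.mkAlgHom KK (WBrel m n)
      ((fH m n i h - algebraMap KK _ qv) * (fH m n i h + algebraMap KK _ qv⁻¹))
      = RingQuot.mkAlgHom KK (WBrel m n) 0 := RingQuot.mkAlgHom_rel _ (WBrel.quad i h)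
  rw [map_mul, map_sub, map_add, map_zero, AlgHom.commutes, AlgHom.commutes] at h0
  exact h0

lemma HB_mul_HBinv (i : ℤ) (h : validIdx m n i) : HB m n i h * HBinv m n i h = 1 := by
  show HB m n i h * (HB m n i h - cc (qv - qv⁻¹)) = 1
  have hms : cc (qv - qv⁻¹) = cc qv - cc qv⁻¹ := map_sub (algebraMap KK (WB m n)) _ _
  rw [hms]
  have hab : cc qv * cc qv⁻¹ = 1 := by
    rw [← map_mul, mul_inv_cancel₀ qv_ne_zero, map_one]
  exact quad_helper1 (HB m n i h) (cc qv) (cc qv⁻¹) hab (Algebra.commutes qv _) (quad_rel i h)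

lemma HBinv_mul_HB (i : ℤ) (h : validIdx m n i) : HBinv m n i h * HB m n i h = 1 := by
  show (HB m n i h - cc (qv - qv⁻¹)) * HB m n i h = 1
  have hms : cc (qv - qv⁻¹) = cc qv - cc qv⁻¹ := map_sub (algebraMap KK (WB m n)) _ _
  rw [hms]
  have hab : cc qv * cc qv⁻¹ = 1 := by
    rw [← map_mul, mul_inv_cancel₀ qv_ne_zero, map_one]
  exact quad_helper2 (HB m n i h) (cc qv) (cc qv⁻¹) hab (Algebra.commutes qv⁻¹ _) (quad_rel i h)

lemma Htil_mul_Htilinv (i : ℤ) : Htil m n i * Htilinv m n i = 1 := by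
  unfold Htil Htilinv
  split_ifs with h
  · exact HB_mul_HBinv i h
  · simp

lemma Htilinv_mul_Htil (i : ℤ) : Htilinv m n i * Htil m n i = 1 := by
  unfold Htil Htilinv
  split_ifs with h
  · exact HBinv_mul_HB i h
  · simp

lemma Htil_eq (i : ℤ) (h : validIdx m n i) : Htil m n i = HB m n i h := by
  unfold Htil; exact dif_pos h

lemma Htilinv_eq (i : ℤ) (h : validIdx m n i) : Htilinv m n i = HBinv m n i h := by
  unfold Htilinv; exact dif_pos h

/-- `H i` as a unit. -/
def Hu (m n : ℕ) (i : ℤ) : Units (WB m n) :=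
  ⟨Htil m n i, Htilinv m n i, Htil_mul_Htilinv i, Htilinv_mul_Htil i⟩

-- commutation relations, total versions
lemma comm_Htil_Htil (i j : ℤ) (hij : 1 < |i - j|) :
    Commute (Htil m n i) (Htil m n j) := by
  unfold Htil
  split_ifs with h1 h2 h3
  · show _ = _
    exact (by simpa [HB, map_mul] using
      RingQuot.mkAlgHom_rel KK (WBrel.comm i h1 j h2 hij) :
      HB m n i h1 * HB m n j h2 = HB m n j h2 * HB m n i h1)
  · exact Commute.one_right _
  · exact Commute.one_left _
  · exact Commute.one_left _

lemma comm_Htil_Htilinv (i j : ℤ) (hij : 1 < |i - j|) :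
    Commute (Htil m n i) (Htilinv m n j) := by
  have h1 := comm_Htil_Htil (m := m) (n := n) i j hij
  unfold Htilinv
  split_ifs with h
  · rw [Htil_eq j h] at h1
    unfold HBinv
    show _ = _
    exact comm_sub_helper (Htil m n i) (HB m n j h) (algebraMap KK (WB m n) (qv - qv⁻¹))
      h1.eq (Algebra.commutes _ _).symm
  · exact Commute.one_right _

lemma comm_Htilinv_Htil (i j : ℤ) (hij : 1 < |i - j|) :
    Commute (Htilinv m n i) (Htil m n j) :=
  (comm_Htil_Htilinv (m := m) (n := n) j i
    (by rw [abs_sub_comm] at hij; exact hij)).symm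

lemma comm_Htilinv_Htilinv (i j : ℤ) (hij : 1 < |i - j|) :
    Commute (Htilinv m n i) (Htilinv m n j) := by
  have h1 := comm_Htilinv_Htil (m := m) (n := n) i j hij
  unfold Htilinv
  split_ifs with h h2
  · rw [Htil_eq j h2, Htilinv_eq i h] at h1
    unfold HBinv
    show _ = _
    exact comm_sub_helper (HBinv m n i h) (HB m n j h2) (algebraMap KK (WB m n) (qv - qv⁻¹))
      h1.eq (Algebra.commutes _ _).symm
  · exact Commute.one_right _
  · exact Commute.one_left _
  · exact Commute.one_left _

lemma comm_E_Htil (i : ℤ) (h2 : 2 ≤ |i|) : Commute (EB m n) (Htil m n i) := by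
  unfold Htil
  split_ifs with h
  · refine Commute.symm ?_
    show _ = _
    exact (by simpa [HB, EB, map_mul] using
      RingQuot.mkAlgHom_rel KK (WBrel.commE i h h2) :
      HB m n i h * EB m n = EB m n * HB m n i h)
  · exact Commute.one_right _

lemma comm_E_Htilinv (i : ℤ) (h2 : 2 ≤ |i|) : Commute (EB m n) (Htilinv m n i) := by
  have h1 := comm_E_Htil (m := m) (n := n) i h2
  unfold Htilinv
  split_ifs with h
  · rw [Htil_eq i h] at h1
    unfold HBinv
    show _ = _
    exact comm_sub_helper (EB m n) (HB m n i h) (algebraMap KK (WB m n) (qv - qv⁻¹))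
      h1.eq (Algebra.commutes _ _).symm
  · exact Commute.one_right _

-- braid
lemma braid_Htil (i : ℤ) (hi : validIdx m n i) (hi1 : validIdx m n (i+1)) :
    Htil m n i * Htil m n (i+1) * Htil m n i
      = Htil m n (i+1) * Htil m n i * Htil m n (i+1) := by
  rw [Htil_eq i hi, Htil_eq (i+1) hi1]
  simpa [HB, map_mul] using RingQuot.mkAlgHom_rel KK (WBrel.braid i hi hi1)

lemma braid_inv_group {G : Type*} [Group G] {a b : G} (h3 : a * b * a = b * a * b) :
    b⁻¹ * a⁻¹ * b = a * b⁻¹ * a⁻¹ := by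
  apply mul_left_cancel (a := a * b)
  have L : a * b * (b⁻¹ * a⁻¹ * b) = b := by group
  have R : a * b * (a * b⁻¹ * a⁻¹) = b := by
    have h4 : a * b * (a * b⁻¹ * a⁻¹) = (a * b * a) * (b⁻¹ * a⁻¹) := by group
    rw [h4, h3]; group
  rw [L, R]

lemma braid_inv_Htil (i : ℤ) (hi : validIdx m n i) (hi1 : validIdx m n (i+1)) :
    Htilinv m n i * Htilinv m n (i+1) * Htil m n i
      = Htil m n (i+1) * Htilinv m n i * Htilinv m n (i+1) := by
  have hu : Hu m n (i+1) * Hu m n i * Hu m n (i+1) = Hu m n i * Hu m n (i+1) * Hu m n i :=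
    Units.ext (by simpa [Hu, Units.val_mul] using (braid_Htil i hi hi1).symm)
  have hv := congrArg Units.val (braid_inv_group hu)
  simpa [Hu, Units.val_mul] using hv

end Aux2
section Aux3

variable {m n : ℕ}

/-- Product `H₋₁⁻¹ ⋯ H₋ₖ⁻¹`. -/
def Pneg (m n k : ℕ) : WB m n :=
  (((List.range k).map (fun j => Htilinv m n (-((j + 1 : ℕ) : ℤ)))).prod)

/-- Product `H₁ ⋯ Hₖ`. -/
def Ppos (m n k : ℕ) : WB m n :=
  (((List.range k).map (fun j => Htil m n ((j + 1 : ℕ) : ℤ))).prod)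

lemma ek_succ_def (k : ℕ) : ek m n (k+1) = EB m n * Pneg m n k * Ppos m n k * ek m n k := rfl

lemma Pneg_zero : Pneg m n 0 = 1 := by simp [Pneg]

lemma Ppos_zero : Ppos m n 0 = 1 := by simp [Ppos]

lemma Pneg_succ (k : ℕ) :
    Pneg m n (k+1) = Pneg m n k * Htilinv m n (-((k + 1 : ℕ) : ℤ)) := by
  unfold Pneg
  rw [List.range_succ, List.map_append, List.prod_append]
  simp

lemma Ppos_succ (k : ℕ) :
    Ppos m n (k+1) = Ppos m n k * Htil m n ((k + 1 : ℕ) : ℤ) := by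
  unfold Ppos
  rw [List.range_succ, List.map_append, List.prod_append]
  simp

lemma ek_one : ek m n 1 = EB m n := by
  rw [ek_succ_def, Pneg_zero, Ppos_zero]
  show EB m n * 1 * 1 * ek m n 0 = EB m n
  rw [mul_one, mul_one]
  show EB m n * 1 = EB m n
  rw [mul_one]

lemma abs_helper1 {s i : ℤ} (h : |i| + 2 ≤ |s|) : 1 < |s - i| := by
  have h2 := abs_sub_abs_le_abs_sub s i
  linarith

lemma abs_helper2 {a b : ℤ} (ha : 1 ≤ a) (hb : 1 ≤ b) : 1 < |-a - b| := by
  rw [abs_of_neg (by omega : -a - b < 0)]; omega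

lemma abs_helper3 {a b : ℤ} (ha : 1 ≤ a) (hb : 1 ≤ b) : 1 < |a - -b| := by
  rw [sub_neg_eq_add, abs_of_pos (by omega : (0:ℤ) < a + b)]; omega

lemma comm_Pneg (x : WB m n) (k : ℕ)
    (h : ∀ j : ℕ, j < k → Commute x (Htilinv m n (-((j + 1 : ℕ) : ℤ)))) :
    Commute x (Pneg m n k) := by
  apply Commute.list_prod_right
  intro y hy
  simp only [List.mem_map, List.mem_range] at hy
  obtain ⟨j, hj, rfl⟩ := hy
  exact h j hj

lemma comm_Ppos (x : WB m n) (k : ℕ)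
    (h : ∀ j : ℕ, j < k → Commute x (Htil m n ((j + 1 : ℕ) : ℤ))) :
    Commute x (Ppos m n k) := by
  apply Commute.list_prod_right
  intro y hy
  simp only [List.mem_map, List.mem_range] at hy
  obtain ⟨j, hj, rfl⟩ := hy
  exact h j hj

lemma comm_ek (x : WB m n) (k : ℕ) (hE : Commute x (EB m n))
    (hH : ∀ i : ℤ, 1 ≤ |i| → |i| < (k : ℤ) →
      Commute x (Htil m n i) ∧ Commute x (Htilinv m n i)) :
    Commute x (ek m n k) := by
  induction k with
  | zero => exact Commute.one_right x
  | succ k ih =>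
    rw [ek_succ_def]
    refine ((hE.mul_right ?_).mul_right ?_).mul_right (ih ?_)
    · refine comm_Pneg x k ?_
      intro j hj
      refine (hH (-((j + 1 : ℕ) : ℤ)) ?_ ?_).2
      · rw [abs_neg, Nat.abs_cast]; push_cast; omega
      · rw [abs_neg, Nat.abs_cast]; push_cast; omega
    · refine comm_Ppos x k ?_
      intro j hj
      refine (hH ((j + 1 : ℕ) : ℤ) ?_ ?_).1
      · rw [Nat.abs_cast]; push_cast; omega
      · rw [Nat.abs_cast]; push_cast; omega
    · intro i h1 h2
      exact hH i h1 (by push_cast at h2 ⊢; omega)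

lemma comm_Htil_ek (s : ℤ) (k : ℕ) (h2 : 2 ≤ |s|) (hk : (k : ℤ) < |s|) :
    Commute (Htil m n s) (ek m n k) := by
  refine comm_ek _ k (comm_E_Htil s h2).symm ?_
  intro i h1 hik
  constructor
  · exact comm_Htil_Htil s i (abs_helper1 (by omega))
  · exact comm_Htil_Htilinv s i (abs_helper1 (by omega))

lemma comm_Htilinv_ek (s : ℤ) (k : ℕ) (h2 : 2 ≤ |s|) (hk : (k : ℤ) < |s|) :
    Commute (Htilinv m n s) (ek m n k) := by
  refine comm_ek _ k (comm_E_Htilinv s h2).symm ?_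
  intro i h1 hik
  constructor
  · exact comm_Htilinv_Htil s i (abs_helper1 (by omega))
  · exact comm_Htilinv_Htilinv s i (abs_helper1 (by omega))

lemma E_sq : EB m n * EB m n = algebraMap KK (WB m n) δv * EB m n := by
  simpa [EB, map_mul, δv] using RingQuot.mkAlgHom_rel KK (WBrel.esq (m := m) (n := n))

lemma E_mul_ek (k : ℕ) (hk : 1 ≤ k) :
    EB m n * ek m n k = algebraMap KK (WB m n) δv * ek m n k := by
  obtain ⟨j, rfl⟩ : ∃ j, k = j + 1 := ⟨k - 1, by omega⟩
  calc EB m n * ek m n (j+1)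
      = (EB m n * EB m n) * Pneg m n j * Ppos m n j * ek m n j := by
        rw [ek_succ_def]; simp only [mul_assoc]
    _ = (algebraMap KK (WB m n) δv * EB m n) * Pneg m n j * Ppos m n j * ek m n j := by
        rw [E_sq]
    _ = algebraMap KK (WB m n) δv * ek m n (j+1) := by
        rw [ek_succ_def]; simp only [mul_assoc]

lemma ek_mul_E (k : ℕ) (hk : 1 ≤ k) :
    ek m n k * EB m n = algebraMap KK (WB m n) δv * ek m n k := by
  induction k with
  | zero => omega
  | succ k ih =>
    rcases Nat.eq_or_lt_of_le hk with h1 | h1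
    · rw [← h1, ek_one]
      exact E_sq
    · have hk' : 1 ≤ k := by omega
      rw [ek_succ_def]
      simp only [mul_assoc]
      rw [ih hk']
      simp only [mul_scalar_left]

lemma abs_lift (j d : ℕ)
    (hD : ek m n (j+1) * Htil m n (-(j : ℤ)) = ek m n (j+1) * Htil m n (j : ℤ)) :
    ek m n (j+1+d) * Htil m n (-(j : ℤ)) = ek m n (j+1+d) * Htil m n (j : ℤ) := by
  induction d with
  | zero => exact hD
  | succ d ih =>
    show ek m n ((j+1+d)+1) * _ = ek m n ((j+1+d)+1) * _
    rw [ek_succ_def]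
    simp only [mul_assoc]
    rw [ih]

lemma absorb_pair (r : ℕ) (j : ℕ) (h1 : 1 ≤ j)
    (habs : ek m n r * Htil m n (-(j : ℤ)) = ek m n r * Htil m n (j : ℤ)) :
    ek m n r * (Htilinv m n (-(j : ℤ)) * Htil m n (j : ℤ)) = ek m n r := by
  have hj' : (1:ℤ) ≤ (j:ℤ) := by exact_mod_cast h1
  have hc : Commute (Htil m n (j : ℤ)) (Htilinv m n (-(j : ℤ))) := by
    exact comm_Htil_Htilinv _ _ (abs_helper3 hj' hj')
  calc ek m n r * (Htilinv m n (-(j : ℤ)) * Htil m n (j : ℤ))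
      = ek m n r * (Htil m n (j : ℤ) * Htilinv m n (-(j : ℤ))) := by rw [← hc.eq]
    _ = (ek m n r * Htil m n (j : ℤ)) * Htilinv m n (-(j : ℤ)) := by rw [mul_assoc]
    _ = (ek m n r * Htil m n (-(j : ℤ))) * Htilinv m n (-(j : ℤ)) := by rw [← habs]
    _ = ek m n r * (Htil m n (-(j : ℤ)) * Htilinv m n (-(j : ℤ))) := by rw [mul_assoc]
    _ = ek m n r := by rw [Htil_mul_Htilinv, mul_one]

lemma absorb_PQ (r s : ℕ)
    (h : ∀ j : ℕ, 1 ≤ j → j ≤ s →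
      ek m n r * (Htilinv m n (-(j : ℤ)) * Htil m n (j : ℤ)) = ek m n r) :
    ek m n r * (Pneg m n s * Ppos m n s) = ek m n r := by
  induction s with
  | zero => rw [Pneg_zero, Ppos_zero, one_mul, mul_one]
  | succ s ih =>
    have hc : Commute (Htilinv m n (-((s + 1 : ℕ) : ℤ))) (Ppos m n s) := by
      refine comm_Ppos _ s ?_
      intro j hj
      exact comm_Htilinv_Htil _ _ (abs_helper2 (by push_cast; omega) (by push_cast; omega))
    rw [Pneg_succ, Ppos_succ]
    have key : Pneg m n s * Htilinv m n (-((s + 1 : ℕ) : ℤ)) * (Ppos m n s * Htil m n ((s + 1 : ℕ) : ℤ))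
        = (Pneg m n s * Ppos m n s) * (Htilinv m n (-((s + 1 : ℕ) : ℤ)) * Htil m n ((s + 1 : ℕ) : ℤ)) := by
      simp only [mul_assoc]
      rw [lcomm hc]
    rw [key, ← mul_assoc]
    have hcast : ((s + 1 : ℕ) : ℤ) = ((s+1 : ℕ) : ℤ) := rfl
    rw [ih (fun j hj1 hj2 => h j hj1 (by omega))]
    exact h (s+1) (by omega) (by omega)

end Aux3
section Aux4

variable {m n : ℕ}

lemma valid_pos (j : ℕ) (h1 : 1 ≤ j) (h2 : j + 1 ≤ n) : validIdx m n (j : ℤ) :=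
  Or.inl ⟨by exact_mod_cast h1, by push_cast; omega⟩

lemma valid_neg (j : ℕ) (h1 : 1 ≤ j) (h2 : j + 1 ≤ m) : validIdx m n (-(j : ℤ)) :=
  Or.inr ⟨by push_cast; omega, by push_cast; omega⟩

lemma rel7' (h1 : validIdx m n 1) (hm : validIdx m n (-1)) :
    EB m n * Htilinv m n (-1) * Htil m n 1 * EB m n * Htil m n (-1)
      = EB m n * Htilinv m n (-1) * Htil m n 1 * EB m n * Htil m n 1 := by
  have h0 := RingQuot.mkAlgHom_rel KK (WBrel.rel7 (m := m) (n := n) h1 hm)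
  simp only [map_mul] at h0
  have hinv : RingQuot.mkAlgHom KK (WBrel m n) (fHinv m n (-1) hm) = HBinv m n (-1) hm := by
    unfold fHinv HBinv
    rw [map_sub, AlgHom.commutes]
    rfl
  rw [hinv] at h0
  rw [Htil_eq 1 h1, Htil_eq (-1) hm, Htilinv_eq (-1) hm]
  exact h0

lemma Pneg_one : Pneg m n 1 = Htilinv m n (-1) := by
  have := Pneg_succ (m := m) (n := n) 0
  rw [Pneg_zero, one_mul] at this
  rw [this]
  norm_num

lemma Ppos_one : Ppos m n 1 = Htil m n 1 := by
  have := Ppos_succ (m := m) (n := n) 0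
  rw [Ppos_zero, one_mul] at this
  rw [this]
  norm_num

lemma ek_two : ek m n 2 = EB m n * Htilinv m n (-1) * Htil m n 1 * EB m n := by
  rw [ek_succ_def, Pneg_one, Ppos_one, ek_one]

end Aux4
theorem main_ind (m n : ℕ) : ∀ k : ℕ, 1 ≤ k → k + 1 ≤ min m n →
    (ek m n k * Htilinv m n (-(k : ℤ)) * Htil m n (k : ℤ) * ek m n k
        = algebraMap KK (WB m n) (δv ^ (k - 1)) * ek m n (k + 1))
    ∧ (ek m n (k + 1) * Htil m n (-(k : ℤ)) = ek m n (k + 1) * Htil m n (k : ℤ)) := by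
  intro k
  induction k using Nat.strong_induction_on with
  | _ k IH =>
    intro hk1 hmin
    rcases Nat.lt_or_ge k 2 with hk2 | hk2
    · -- base case : k = 1
      have hk : k = 1 := by omega
      subst hk
      have hn2 : 2 ≤ n := by omega
      have hm2 : 2 ≤ m := by omega
      have hv1 : validIdx m n 1 := by
        have h9 := valid_pos (m := m) (n := n) 1 le_rfl hn2
        simpa using h9
      have hvm : validIdx m n (-1) := by
        have h9 := valid_neg (m := m) (n := n) 1 le_rfl hm2
        simpa using h9
      constructor
      · show ek m n 1 * Htilinv m n (-1) * Htil m n 1 * ek m n 1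
            = algebraMap KK (WB m n) (δv ^ 0) * ek m n 2
        rw [ek_one, ek_two, pow_zero, map_one, one_mul]
      · show ek m n 2 * Htil m n (-1) = ek m n 2 * Htil m n 1
        rw [ek_two]
        exact rel7' hv1 hvm
    · -- inductive case : k = p + 2
      obtain ⟨p, rfl⟩ : ∃ p, k = p + 1 + 1 := ⟨k - 2, by omega⟩
      have hm' : p + 1 + 1 + 1 ≤ m := by omega
      have hn' : p + 1 + 1 + 1 ≤ n := by omega
      obtain ⟨Mp, Dp⟩ := IH (p+1) (by omega) (by omega) (by omega)
      -- absorption facts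
      have absK : ∀ j : ℕ, 1 ≤ j → j ≤ p + 1 →
          ek m n (p+1+1) * Htil m n (-(j : ℤ)) = ek m n (p+1+1) * Htil m n (j : ℤ) := by
        intro j hj1 hj2
        have hD := (IH j (by omega) (by omega) (by omega)).2
        have h2 := abs_lift (m := m) (n := n) j (p + 1 - j) hD
        rwa [show j + 1 + (p + 1 - j) = p + 1 + 1 from by omega] at h2
      have absKm1 : ∀ j : ℕ, 1 ≤ j → j ≤ p →
          ek m n (p+1) * Htil m n (-(j : ℤ)) = ek m n (p+1) * Htil m n (j : ℤ) := by
        intro j hj1 hj2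
        have hD := (IH j (by omega) (by omega) (by omega)).2
        have h2 := abs_lift (m := m) (n := n) j (p - j) hD
        rwa [show j + 1 + (p - j) = p + 1 from by omega] at h2
      have PQK : ek m n (p+1+1) * (Pneg m n p * Ppos m n p) = ek m n (p+1+1) :=
        absorb_PQ (p+1+1) p (fun j h1 h2 => absorb_pair (p+1+1) j h1 (absK j h1 (by omega)))
      have PQKm1 : ek m n (p+1) * (Pneg m n p * Ppos m n p) = ek m n (p+1) :=
        absorb_PQ (p+1) p (fun j h1 h2 => absorb_pair (p+1) j h1 (absKm1 j h1 h2))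
      -- commutation facts
      have cbZ : Commute (Htil m n (-((p+1+1 : ℕ) : ℤ))) (ek m n (p+1)) :=
        comm_Htil_ek _ (p+1) (by rw [abs_neg, Nat.abs_cast]; push_cast; omega)
          (by rw [abs_neg, Nat.abs_cast]; push_cast; omega)
      have cb'Z : Commute (Htilinv m n (-((p+1+1 : ℕ) : ℤ))) (ek m n (p+1)) :=
        comm_Htilinv_ek _ (p+1) (by rw [abs_neg, Nat.abs_cast]; push_cast; omega)
          (by rw [abs_neg, Nat.abs_cast]; push_cast; omega)
      have cyZ : Commute (Htil m n ((p+1+1 : ℕ) : ℤ)) (ek m n (p+1)) :=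
        comm_Htil_ek _ (p+1) (by rw [Nat.abs_cast]; push_cast; omega)
          (by rw [Nat.abs_cast]; push_cast; omega)
      have cyE : Commute (Htil m n ((p+1+1 : ℕ) : ℤ)) (EB m n) :=
        (comm_E_Htil _ (by rw [Nat.abs_cast]; push_cast; omega)).symm
      have cb'E : Commute (Htilinv m n (-((p+1+1 : ℕ) : ℤ))) (EB m n) :=
        (comm_E_Htilinv _ (by rw [abs_neg, Nat.abs_cast]; push_cast; omega)).symm
      have cyPn : Commute (Htil m n ((p+1+1 : ℕ) : ℤ)) (Pneg m n p) :=
        comm_Pneg _ p (fun j hj => comm_Htil_Htilinv _ _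
          (abs_helper3 (by push_cast; omega) (by push_cast; omega)))
      have cyPp : Commute (Htil m n ((p+1+1 : ℕ) : ℤ)) (Ppos m n p) :=
        comm_Ppos _ p (fun j hj => comm_Htil_Htil _ _
          (abs_helper1 (by rw [Nat.abs_cast, Nat.abs_cast]; push_cast; omega)))
      have cb'Pn : Commute (Htilinv m n (-((p+1+1 : ℕ) : ℤ))) (Pneg m n p) :=
        comm_Pneg _ p (fun j hj => comm_Htilinv_Htilinv _ _
          (abs_helper1 (by rw [abs_neg, abs_neg, Nat.abs_cast, Nat.abs_cast]; push_cast; omega)))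
      have cb'Pp : Commute (Htilinv m n (-((p+1+1 : ℕ) : ℤ))) (Ppos m n p) :=
        comm_Ppos _ p (fun j hj => comm_Htilinv_Htil _ _
          (abs_helper2 (by push_cast; omega) (by push_cast; omega)))
      have cya' : Commute (Htil m n ((p+1+1 : ℕ) : ℤ)) (Htilinv m n (-((p+1 : ℕ) : ℤ))) :=
        comm_Htil_Htilinv _ _ (abs_helper3 (by push_cast; omega) (by push_cast; omega))
      have cyb : Commute (Htil m n ((p+1+1 : ℕ) : ℤ)) (Htil m n (-((p+1+1 : ℕ) : ℤ))) :=
        comm_Htil_Htil _ _ (abs_helper3 (by push_cast; omega) (by push_cast; omega))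
      have cxb : Commute (Htil m n ((p+1 : ℕ) : ℤ)) (Htil m n (-((p+1+1 : ℕ) : ℤ))) :=
        comm_Htil_Htil _ _ (abs_helper3 (by push_cast; omega) (by push_cast; omega))
      have cxb' : Commute (Htil m n ((p+1 : ℕ) : ℤ)) (Htilinv m n (-((p+1+1 : ℕ) : ℤ))) :=
        comm_Htil_Htilinv _ _ (abs_helper3 (by push_cast; omega) (by push_cast; omega))
      have cxa' : Commute (Htil m n ((p+1 : ℕ) : ℤ)) (Htilinv m n (-((p+1 : ℕ) : ℤ))) :=
        comm_Htil_Htilinv _ _ (abs_helper3 (by push_cast; omega) (by push_cast; omega))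
      have cPa' : Commute (Htilinv m n (-((p+1 : ℕ) : ℤ))) (Ppos m n p) :=
        comm_Ppos _ p (fun j hj => comm_Htilinv_Htil _ _
          (abs_helper2 (by push_cast; omega) (by push_cast; omega)))
      have cPp1b' : Commute (Ppos m n (p+1)) (Htilinv m n (-((p+1+1 : ℕ) : ℤ))) :=
        (comm_Ppos _ (p+1) (fun j hj => comm_Htilinv_Htil _ _
          (abs_helper2 (by push_cast; omega) (by push_cast; omega)))).symm
      -- braid relations
      have hcast1 : (-((p+1+1 : ℕ) : ℤ)) + 1 = -((p+1 : ℕ) : ℤ) := by push_cast; ring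
      have hcast2 : ((p+1 : ℕ) : ℤ) + 1 = ((p+1+1 : ℕ) : ℤ) := by push_cast; ring
      have hvB1 : validIdx m n (-((p+1+1 : ℕ) : ℤ)) := valid_neg (p+1+1) (by omega) (by omega)
      have hvB2 : validIdx m n ((-((p+1+1 : ℕ) : ℤ)) + 1) := by
        rw [hcast1]; exact valid_neg (p+1) (by omega) (by omega)
      have Bneg := braid_inv_Htil (-((p+1+1 : ℕ) : ℤ)) hvB1 hvB2
      rw [hcast1] at Bneg
      have hvP1 : validIdx m n ((p+1 : ℕ) : ℤ) := valid_pos (p+1) (by omega) (by omega)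
      have hvP2 : validIdx m n (((p+1 : ℕ) : ℤ) + 1) := by
        rw [hcast2]; exact valid_pos (p+1+1) (by omega) (by omega)
      have Bpos := braid_Htil ((p+1 : ℕ) : ℤ) hvP1 hvP2
      rw [hcast2] at Bpos
      have Bneg' : ∀ c : WB m n,
          Htilinv m n (-((p+1+1:ℕ):ℤ)) * (Htilinv m n (-((p+1:ℕ):ℤ)) * (Htil m n (-((p+1+1:ℕ):ℤ)) * c))
          = Htil m n (-((p+1:ℕ):ℤ)) * (Htilinv m n (-((p+1+1:ℕ):ℤ)) * (Htilinv m n (-((p+1:ℕ):ℤ)) * c)) := by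
        intro c
        have h9 := congrArg (fun w => w * c) Bneg
        simpa only [mul_assoc] using h9
      have Bpos' : ∀ c : WB m n,
          Htil m n ((p+1+1:ℕ):ℤ) * (Htil m n ((p+1:ℕ):ℤ) * (Htil m n ((p+1+1:ℕ):ℤ) * c))
          = Htil m n ((p+1:ℕ):ℤ) * (Htil m n ((p+1+1:ℕ):ℤ) * (Htil m n ((p+1:ℕ):ℤ) * c)) := by
        intro c
        have h9 := congrArg (fun w => w * c) Bpos.symm
        simpa only [mul_assoc] using h9
      -- the expanded form of e_{p+2}
      have f2 : ek m n (p+1+1) = EB m n * (Pneg m n p * (Ppos m n p *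
          (Htilinv m n (-((p+1:ℕ):ℤ)) * (Htil m n ((p+1:ℕ):ℤ) * ek m n (p+1))))) := by
        rw [ek_succ_def (k := p+1), Pneg_succ (k := p), Ppos_succ (k := p)]
        simp only [mul_assoc]
        rw [lcomm cPa']
      -- absorption of the leading E (Pneg p) (Ppos p) chunk into e_{p+2}
      have absorbY : ∀ c : WB m n, ek m n (p+1+1) * (EB m n * (Pneg m n p * (Ppos m n p * c)))
          = algebraMap KK (WB m n) δv * (ek m n (p+1+1) * c) := by
        intro c
        calc ek m n (p+1+1) * (EB m n * (Pneg m n p * (Ppos m n p * c)))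
            = ((ek m n (p+1+1) * EB m n) * (Pneg m n p * Ppos m n p)) * c := by
              simp only [mul_assoc]
          _ = ((algebraMap KK (WB m n) δv * ek m n (p+1+1)) * (Pneg m n p * Ppos m n p)) * c := by
              rw [ek_mul_E _ (by omega)]
          _ = (algebraMap KK (WB m n) δv * (ek m n (p+1+1) * (Pneg m n p * Ppos m n p))) * c := by
              simp only [mul_assoc]
          _ = (algebraMap KK (WB m n) δv * ek m n (p+1+1)) * c := by rw [PQK]
          _ = algebraMap KK (WB m n) δv * (ek m n (p+1+1) * c) := by rw [mul_assoc]
      have ekA : ek m n (p+1+1) * Htil m n (-((p+1:ℕ):ℤ)) = ek m n (p+1+1) * Htil m n ((p+1:ℕ):ℤ) :=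
        absK (p+1) (by omega) (by omega)
      have ekA' : ∀ c : WB m n, ek m n (p+1+1) * (Htil m n (-((p+1:ℕ):ℤ)) * c)
          = ek m n (p+1+1) * (Htil m n ((p+1:ℕ):ℤ) * c) := by
        intro c; rw [← mul_assoc, ekA, mul_assoc]
      -- P : e_{p+1} e_{p+2} = δ^{p+1} e_{p+2}
      have Pk : ek m n (p+1) * ek m n (p+1+1)
          = algebraMap KK (WB m n) (δv ^ (p+1)) * ek m n (p+1+1) := by
        have e1 : ek m n (p+1) * ek m n (p+1+1)
            = (ek m n (p+1) * EB m n) * (Pneg m n (p+1) * (Ppos m n (p+1) * ek m n (p+1))) := by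
          rw [ek_succ_def (k := p+1)]
          simp only [mul_assoc]
        rw [ek_mul_E _ (by omega)] at e1
        rw [Pneg_succ (k := p), Ppos_succ (k := p)] at e1
        simp only [mul_assoc] at e1
        rw [lcomm cPa'] at e1
        have abs2 : ∀ c : WB m n, ek m n (p+1) * (Pneg m n p * (Ppos m n p * c)) = ek m n (p+1) * c := by
          intro c
          calc ek m n (p+1) * (Pneg m n p * (Ppos m n p * c))
              = (ek m n (p+1) * (Pneg m n p * Ppos m n p)) * c := by simp only [mul_assoc]
            _ = ek m n (p+1) * c := by rw [PQKm1]
        rw [abs2] at e1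
        have Mp' : ek m n (p+1) * (Htilinv m n (-((p+1:ℕ):ℤ)) * (Htil m n ((p+1:ℕ):ℤ) * ek m n (p+1)))
            = algebraMap KK (WB m n) (δv ^ p) * ek m n (p+1+1) := by
          have h9 := Mp
          simp only [mul_assoc] at h9
          exact h9
        rw [Mp', scalar_scalar] at e1
        rw [show δv * δv ^ p = δv ^ (p+1) from (pow_succ' δv p).symm] at e1
        exact e1
      -- M : the main formula at k = p+2
      have MK : ek m n (p+1+1) * Htilinv m n (-((p+1+1:ℕ):ℤ)) * Htil m n ((p+1+1:ℕ):ℤ) * ek m n (p+1+1)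
          = algebraMap KK (WB m n) (δv ^ (p+1)) * ek m n (p+1+1+1) := by
        nth_rewrite 1 [ek_succ_def (k := p+1)]
        simp only [mul_assoc]
        rw [lcomm (cb'Z.symm), lcomm (cyZ.symm)]
        rw [Pk]
        simp only [mul_scalar_left]
        rw [lcomm cPp1b']
        rw [ek_succ_def (k := p+1+1), Pneg_succ (k := p+1), Ppos_succ (k := p+1)]
        simp only [mul_assoc]
      -- the two expansions of e_{p+2} · H_{±(p+2)}
      have step1 : ek m n (p+1+1) * Htil m n (-((p+1+1:ℕ):ℤ))
          = EB m n * (Pneg m n p * (Ppos m n p * (Htilinv m n (-((p+1:ℕ):ℤ)) *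
            (Htil m n (-((p+1+1:ℕ):ℤ)) * (Htil m n ((p+1:ℕ):ℤ) * ek m n (p+1)))))) := by
        rw [f2]
        simp only [mul_assoc]
        rw [(cbZ.symm).eq, lcomm cxb]
      have step2 : ek m n (p+1+1) * Htil m n ((p+1+1:ℕ):ℤ)
          = EB m n * (Pneg m n p * (Ppos m n p * (Htilinv m n (-((p+1:ℕ):ℤ)) *
            (Htil m n ((p+1:ℕ):ℤ) * (Htil m n ((p+1+1:ℕ):ℤ) * ek m n (p+1)))))) := by
        rw [f2]
        simp only [mul_assoc]
        rw [(cyZ.symm).eq]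
      -- the key computation
      have L : ek m n (p+1+1) * (Htilinv m n (-((p+1+1:ℕ):ℤ)) * (Htil m n ((p+1+1:ℕ):ℤ) *
            (ek m n (p+1+1) * Htil m n (-((p+1+1:ℕ):ℤ)))))
          = algebraMap KK (WB m n) δv * (ek m n (p+1+1) * (Htilinv m n (-((p+1+1:ℕ):ℤ)) *
            (Htilinv m n (-((p+1:ℕ):ℤ)) * (Htil m n ((p+1:ℕ):ℤ) * (Htil m n ((p+1+1:ℕ):ℤ) *
            (Htil m n ((p+1:ℕ):ℤ) * ek m n (p+1))))))) := by
        rw [step1]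
        rw [lcomm cyE, lcomm cb'E, lcomm cyPn, lcomm cb'Pn, lcomm cyPp, lcomm cb'Pp]
        rw [lcomm cya', lcomm cyb]
        rw [Bneg']
        rw [absorbY]
        rw [ekA']
        rw [lcomm cxb', lcomm cxa']
      have R : ek m n (p+1+1) * (Htilinv m n (-((p+1+1:ℕ):ℤ)) * (Htil m n ((p+1+1:ℕ):ℤ) *
            (ek m n (p+1+1) * Htil m n ((p+1+1:ℕ):ℤ))))
          = algebraMap KK (WB m n) δv * (ek m n (p+1+1) * (Htilinv m n (-((p+1+1:ℕ):ℤ)) *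
            (Htilinv m n (-((p+1:ℕ):ℤ)) * (Htil m n ((p+1:ℕ):ℤ) * (Htil m n ((p+1+1:ℕ):ℤ) *
            (Htil m n ((p+1:ℕ):ℤ) * ek m n (p+1))))))) := by
        rw [step2]
        rw [lcomm cyE, lcomm cb'E, lcomm cyPn, lcomm cb'Pn, lcomm cyPp, lcomm cb'Pp]
        rw [lcomm cya']
        rw [absorbY]
        rw [Bpos']
      have G : ek m n (p+1+1) * Htilinv m n (-((p+1+1:ℕ):ℤ)) * Htil m n ((p+1+1:ℕ):ℤ) * ek m n (p+1+1) * Htil m n (-((p+1+1:ℕ):ℤ))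
          = ek m n (p+1+1) * Htilinv m n (-((p+1+1:ℕ):ℤ)) * Htil m n ((p+1+1:ℕ):ℤ) * ek m n (p+1+1) * Htil m n ((p+1+1:ℕ):ℤ) := by
        simp only [mul_assoc]
        rw [L, R]
      have DK : ek m n (p+1+1+1) * Htil m n (-((p+1+1:ℕ):ℤ)) = ek m n (p+1+1+1) * Htil m n ((p+1+1:ℕ):ℤ) := by
        refine scalar_cancel (δv ^ (p+1)) (pow_ne_zero _ δv_ne) ?_
        calc algebraMap KK (WB m n) (δv^(p+1)) * (ek m n (p+1+1+1) * Htil m n (-((p+1+1:ℕ):ℤ)))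
            = (algebraMap KK (WB m n) (δv^(p+1)) * ek m n (p+1+1+1)) * Htil m n (-((p+1+1:ℕ):ℤ)) := by
              rw [mul_assoc]
          _ = (ek m n (p+1+1) * Htilinv m n (-((p+1+1:ℕ):ℤ)) * Htil m n ((p+1+1:ℕ):ℤ) * ek m n (p+1+1)) * Htil m n (-((p+1+1:ℕ):ℤ)) := by
              rw [← MK]
          _ = (ek m n (p+1+1) * Htilinv m n (-((p+1+1:ℕ):ℤ)) * Htil m n ((p+1+1:ℕ):ℤ) * ek m n (p+1+1)) * Htil m n ((p+1+1:ℕ):ℤ) := G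
          _ = (algebraMap KK (WB m n) (δv^(p+1)) * ek m n (p+1+1+1)) * Htil m n ((p+1+1:ℕ):ℤ) := by
              rw [MK]
          _ = algebraMap KK (WB m n) (δv^(p+1)) * (ek m n (p+1+1+1) * Htil m n ((p+1+1:ℕ):ℤ)) := by
              rw [mul_assoc]
      exact ⟨MK, DK⟩
/-- For `1 ≤ k ≤ min{m,n} - 1`, one has
`e_{k+1} = ((q - q⁻¹)/(t - t⁻¹))^{k-1} ⬝ e_k H_{-k}⁻¹ H_k e_k`. -/
theorem ek_succ_via_ek (m n : ℕ) (hm : 1 ≤ m) (hn : 1 ≤ n) (k : ℕ)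
    (hk1 : 1 ≤ k) (hk : k + 1 ≤ min m n) :
    ek m n (k + 1) =
      algebraMap KK (WB m n) (((qv - qv⁻¹) / (tv - tv⁻¹)) ^ (k - 1)) *
        (ek m n k * Htilinv m n (-(k : ℤ)) * Htil m n (k : ℤ) * ek m n k) := by
  have M := (main_ind m n k hk1 hk).1
  rw [M, ← mul_assoc, ← map_mul]
  have hone : ((qv - qv⁻¹) / (tv - tv⁻¹)) ^ (k - 1) * δv ^ (k - 1) = 1 := by
    rw [← mul_pow]
    have h2 : (qv - qv⁻¹) / (tv - tv⁻¹) * δv = 1 := by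
      rw [δv, div_mul_div_comm, mul_comm (qv - qv⁻¹)]
      exact div_self (mul_ne_zero tsub_ne qsub_ne)
    rw [h2, one_pow]
  rw [hone, map_one, one_mul]

end
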